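/- If A and B are two finite Blaschke products of the same degree n that agree at n distinct points of the open unit disc, then A ≡ B. -/

import Mathlib

open Complex Polynomial Metric


lemma key_max (n : ℕ) (a b : Fin n → ℂ) (hb : ∀ k, ‖b k‖ < 1)
    (h : ∀ z : ℂ, ‖z‖ = 1 →
      0 < ((∏ k, (z - a k)) * (starRingEnd ℂ) (∏ k, (z - b k))).im) : False := by
  set num : ℂ → ℂ := fun w => ∏ k, (1 - a k * w) with hnum
  set den : ℂ → ℂ := fun w => ∏ k, (1 - b k * w) with hden
  have hdnum : Differentiable ℂ num :=
    Differentiable.fun_finsetProd fun i _ =>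
      (differentiable_const _).sub ((differentiable_id).const_mul _)
  have hdden : Differentiable ℂ den :=
    Differentiable.fun_finsetProd fun i _ =>
      (differentiable_const _).sub ((differentiable_id).const_mul _)
  have hden0 : ∀ w : ℂ, ‖w‖ ≤ 1 → den w ≠ 0 := by
    intro w hw
    refine Finset.prod_ne_zero_iff.2 fun k _ => sub_ne_zero.2 fun hc => ?_
    have h1 : ‖b k * w‖ < 1 := by
      rw [norm_mul]
      calc ‖b k‖ * ‖w‖ ≤ ‖b k‖ * 1 :=
            mul_le_mul_of_nonneg_left hw (norm_nonneg _)
        _ < 1 := by simpa using hb k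
    rw [← hc] at h1; simp at h1
  set g : ℂ → ℂ := fun w => num w / den w with hg
  -- key: on the unit circle, Im (g w) > 0
  have him : ∀ w : ℂ, ‖w‖ = 1 → 0 < (g w).im := by
    intro w hw
    set z := (starRingEnd ℂ) w with hz
    have hzabs : ‖z‖ = 1 := by rw [hz, Complex.norm_conj]; exact hw
    have hzw : z * w = 1 := by
      rw [hz, mul_comm, Complex.mul_conj, Complex.normSq_eq_norm_sq, hw]; norm_num
    have hnumz : (∏ k, (z - a k)) = z ^ n * num w := by
      have : ∀ k : Fin n, z - a k = z * (1 - a k * w) := by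
        intro c
        have h1 : z * (1 - a c * w) = z - a c * (z * w) := by ring
        rw [h1, hzw, mul_one]
      rw [Finset.prod_congr rfl fun k _ => this k, Finset.prod_mul_distrib,
        Finset.prod_const, Finset.card_univ, Fintype.card_fin]
    have hdenz : (∏ k, (z - b k)) = z ^ n * den w := by
      have : ∀ k : Fin n, z - b k = z * (1 - b k * w) := by
        intro c
        have h1 : z * (1 - b c * w) = z - b c * (z * w) := by ring
        rw [h1, hzw, mul_one]
      rw [Finset.prod_congr rfl fun k _ => this k, Finset.prod_mul_distrib,
        Finset.prod_const, Finset.card_univ, Fintype.card_fin]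
    have hW : num w * (starRingEnd ℂ) (den w) =
        (∏ k, (z - a k)) * (starRingEnd ℂ) (∏ k, (z - b k)) := by
      rw [hnumz, hdenz, map_mul, map_pow]
      have hcz : (starRingEnd ℂ) z = w := by rw [hz]; exact Complex.conj_conj w
      rw [hcz]
      have : z ^ n * num w * (w ^ n * (starRingEnd ℂ) (den w)) =
          (z * w) ^ n * (num w * (starRingEnd ℂ) (den w)) := by ring
      rw [this, hzw, one_pow, one_mul]
    have hgw : g w = (num w * (starRingEnd ℂ) (den w)) /
        ((Complex.normSq (den w) : ℝ) : ℂ) := by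
      rw [hg]
      have hd := hden0 w (le_of_eq hw)
      have hcd : (starRingEnd ℂ) (den w) ≠ 0 := by simpa using hd
      rw [← Complex.mul_conj]
      exact (mul_div_mul_right _ _ hcd).symm
    rw [hgw, Complex.div_ofReal_im]
    exact div_pos (hW ▸ h z hzabs) (Complex.normSq_pos.2 (hden0 w (le_of_eq hw)))
  -- minimum of Im ∘ g on the unit sphere
  have hsph : (Metric.sphere (0:ℂ) 1).Nonempty := ⟨1, by simp⟩
  have hgcont : ContinuousOn g (Metric.sphere (0:ℂ) 1) := by
    apply ContinuousOn.div (hdnum.continuous.continuousOn) (hdden.continuous.continuousOn)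
    intro w hw
    exact hden0 w (le_of_eq (by simpa using hw))
  obtain ⟨w0, hw0, hmin⟩ := (isCompact_sphere (0:ℂ) 1).exists_isMinOn hsph
    (Complex.continuous_im.comp_continuousOn hgcont)
  set ε : ℝ := (g w0).im with hε
  have hεpos : 0 < ε := him w0 (by simpa using hw0)
  -- maximum modulus principle applied to exp (I * g)
  have hdg : DiffContOnCl ℂ (fun w => Complex.exp (Complex.I * g w)) (Metric.ball (0:ℂ) 1) := by
    have hdiff : DifferentiableOn ℂ (fun w => Complex.exp (Complex.I * g w))
        (Metric.closedBall (0:ℂ) 1) := by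
      apply DifferentiableOn.cexp
      apply DifferentiableOn.const_mul
      apply DifferentiableOn.div (hdnum.differentiableOn) (hdden.differentiableOn)
      intro w hw
      exact hden0 w (by simpa using hw)
    exact DifferentiableOn.diffContOnCl (by rwa [closure_ball (0:ℂ) one_ne_zero])
  have hbound : ∀ w ∈ frontier (Metric.ball (0:ℂ) 1),
      ‖Complex.exp (Complex.I * g w)‖ ≤ Real.exp (-ε) := by
    intro w hw
    rw [frontier_ball (0:ℂ) one_ne_zero] at hw
    rw [Complex.norm_exp]
    apply Real.exp_le_exp.2
    have : (Complex.I * g w).re = -(g w).im := by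
      simp [Complex.mul_re]
    rw [this, neg_le_neg_iff]
    exact hmin hw
  have h0 : (0:ℂ) ∈ closure (Metric.ball (0:ℂ) 1) := by
    rw [closure_ball (0:ℂ) one_ne_zero]; simp
  have := Complex.norm_le_of_forall_mem_frontier_norm_le (Metric.isBounded_ball) hdg hbound h0
  have hg0 : g 0 = 1 := by
    rw [hg]; simp [hnum, hden]
  rw [hg0, mul_one, Complex.norm_exp] at this
  simp only [Complex.I_re] at this
  have : (1:ℝ) ≤ Real.exp (-ε) := by simpa using this
  have := Real.exp_le_exp.1 (by simpa [Real.exp_zero] using this)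
  linarith


lemma disc_q_ne (n : ℕ) (c : Fin n → ℂ) (hc : ∀ k, ‖c k‖ < 1)
    (w : ℂ) (hw : ‖w‖ < 1) :
    (∏ k, (1 - (starRingEnd ℂ) (c k) * w)) ≠ 0 := by
  refine Finset.prod_ne_zero_iff.2 fun k _ => sub_ne_zero.2 fun h1 => ?_
  have : ‖(starRingEnd ℂ) (c k) * w‖ < 1 := by
    rw [norm_mul, Complex.norm_conj]
    calc ‖c k‖ * ‖w‖ ≤ 1 * ‖w‖ :=
          mul_le_mul_of_nonneg_right (le_of_lt (hc k)) (norm_nonneg _)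
      _ < 1 := by simpa using hw
  rw [← h1] at this; simp at this

lemma circle_q_eval (n : ℕ) (c : Fin n → ℂ) (w : ℂ) (hw : ‖w‖ = 1) :
    (∏ k, (1 - (starRingEnd ℂ) (c k) * w)) =
      w ^ n * (starRingEnd ℂ) (∏ k, (w - c k)) := by
  have hww : w * (starRingEnd ℂ) w = 1 := by
    rw [Complex.mul_conj, Complex.normSq_eq_norm_sq, hw]; norm_num
  have hfac : ∀ k : Fin n, 1 - (starRingEnd ℂ) (c k) * w =
      w * ((starRingEnd ℂ) w - (starRingEnd ℂ) (c k)) := by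
    intro k
    rw [mul_sub, hww]; ring
  rw [Finset.prod_congr rfl fun k _ => hfac k, Finset.prod_mul_distrib,
    Finset.prod_const, Finset.card_univ, Fintype.card_fin, map_prod]
  congr 1
  exact Finset.prod_congr rfl fun k _ => by rw [map_sub]

/-- Two finite Blaschke products of the same degree `n` that agree at `n`
distinct points of the open unit disc are identical on the disc. -/
theorem blaschke_eq_of_agree (n : ℕ) (a b : Fin n → ℂ)
    (ha : ∀ k, ‖a k‖ < 1) (hb : ∀ k, ‖b k‖ < 1)
    (lam : Fin n → ℂ) (hlaminj : Function.Injective lam)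
    (hlam : ∀ j, ‖lam j‖ < 1)
    (heq : ∀ j, (∏ k, (lam j - a k) / (1 - (starRingEnd ℂ) (a k) * lam j)) =
      ∏ k, (lam j - b k) / (1 - (starRingEnd ℂ) (b k) * lam j)) :
    ∀ z, ‖z‖ < 1 →
      (∏ k, (z - a k) / (1 - (starRingEnd ℂ) (a k) * z)) =
      ∏ k, (z - b k) / (1 - (starRingEnd ℂ) (b k) * z) := by
  classical
  set pA : Polynomial ℂ := ∏ k, (X - C (a k)) with hpA
  set qA : Polynomial ℂ := ∏ k, (1 - C ((starRingEnd ℂ) (a k)) * X) with hqA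
  set pB : Polynomial ℂ := ∏ k, (X - C (b k)) with hpB
  set qB : Polynomial ℂ := ∏ k, (1 - C ((starRingEnd ℂ) (b k)) * X) with hqB
  set F : Polynomial ℂ := pA * qB - pB * qA with hFdef
  have epA : ∀ w : ℂ, eval w pA = ∏ k, (w - a k) := by
    intro w; rw [hpA, eval_prod]; exact Finset.prod_congr rfl fun k _ => by simp
  have epB : ∀ w : ℂ, eval w pB = ∏ k, (w - b k) := by
    intro w; rw [hpB, eval_prod]; exact Finset.prod_congr rfl fun k _ => by simp
  have eqA : ∀ w : ℂ, eval w qA = ∏ k, (1 - (starRingEnd ℂ) (a k) * w) := by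
    intro w; rw [hqA, eval_prod]; exact Finset.prod_congr rfl fun k _ => by simp
  have eqB : ∀ w : ℂ, eval w qB = ∏ k, (1 - (starRingEnd ℂ) (b k) * w) := by
    intro w; rw [hqB, eval_prod]; exact Finset.prod_congr rfl fun k _ => by simp
  have eF : ∀ w : ℂ, eval w F = (∏ k, (w - a k)) * (∏ k, (1 - (starRingEnd ℂ) (b k) * w))
      - (∏ k, (w - b k)) * (∏ k, (1 - (starRingEnd ℂ) (a k) * w)) := by
    intro w; rw [hFdef, eval_sub, eval_mul, eval_mul, epA, epB, eqA, eqB]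
  -- F vanishes at the lam j
  have hFlam : ∀ j, eval (lam j) F = 0 := by
    intro j
    have h1 := heq j
    rw [Finset.prod_div_distrib, Finset.prod_div_distrib,
      div_eq_div_iff (disc_q_ne n a ha _ (hlam j)) (disc_q_ne n b hb _ (hlam j))] at h1
    rw [eF, h1]; ring
  -- it suffices to show F = 0
  suffices hF0 : F = 0 by
    intro z hz
    have h2 := eF z
    rw [hF0, eval_zero] at h2
    rw [Finset.prod_div_distrib, Finset.prod_div_distrib,
      div_eq_div_iff (disc_q_ne n a ha _ hz) (disc_q_ne n b hb _ hz)]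
    linear_combination -h2
  by_contra hFne
  -- W and circle identity for F
  set W : ℂ → ℂ := fun w => (∏ k, (w - a k)) * (starRingEnd ℂ) (∏ k, (w - b k)) with hW
  have hcirc : ∀ w : ℂ, ‖w‖ = 1 →
      eval w F = w ^ n * (W w - (starRingEnd ℂ) (W w)) := by
    intro w hw
    rw [eF, circle_q_eval n a w hw, circle_q_eval n b w hw, hW]
    simp only [map_mul, Complex.conj_conj]
    ring
  -- reflected roots
  have hrefl : ∀ w : ℂ, w ≠ 0 → eval w F = 0 →
      eval (((starRingEnd ℂ) w)⁻¹) F = 0 := by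
    intro w hw0 hFw
    have hcw : (starRingEnd ℂ) w ≠ 0 := by simpa using hw0
    set u : ℂ := ((starRingEnd ℂ) w)⁻¹ with hu
    have huw : u * (starRingEnd ℂ) w = 1 := inv_mul_cancel₀ hcw
    have hPP : ∀ c : Fin n → ℂ, (∏ k, (u - c k)) * ((starRingEnd ℂ) w) ^ n =
        (starRingEnd ℂ) (∏ k, (1 - (starRingEnd ℂ) (c k) * w)) := by
      intro c
      have hfac : ∀ k : Fin n, (u - c k) * (starRingEnd ℂ) w =
          (starRingEnd ℂ) (1 - (starRingEnd ℂ) (c k) * w) := by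
        intro k
        rw [map_sub, map_one, map_mul, Complex.conj_conj, sub_mul, huw]
      rw [map_prod, ← Finset.prod_congr rfl fun k _ => hfac k, Finset.prod_mul_distrib,
        Finset.prod_const, Finset.card_univ, Fintype.card_fin]
    have hQQ : ∀ c : Fin n → ℂ, (∏ k, (1 - (starRingEnd ℂ) (c k) * u)) *
        ((starRingEnd ℂ) w) ^ n = (starRingEnd ℂ) (∏ k, (w - c k)) := by
      intro c
      have hfac : ∀ k : Fin n, (1 - (starRingEnd ℂ) (c k) * u) * (starRingEnd ℂ) w =
          (starRingEnd ℂ) (w - c k) := by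
        intro k
        rw [map_sub]
        have h9 : (1 - (starRingEnd ℂ) (c k) * u) * (starRingEnd ℂ) w =
            (starRingEnd ℂ) w - (starRingEnd ℂ) (c k) * (u * (starRingEnd ℂ) w) := by ring
        rw [h9, huw, mul_one]
      rw [map_prod, ← Finset.prod_congr rfl fun k _ => hfac k, Finset.prod_mul_distrib,
        Finset.prod_const, Finset.card_univ, Fintype.card_fin]
    have hexp : eval u F * (((starRingEnd ℂ) w) ^ n * ((starRingEnd ℂ) w) ^ n) =
        ((∏ k, (u - a k)) * ((starRingEnd ℂ) w) ^ n) *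
          ((∏ k, (1 - (starRingEnd ℂ) (b k) * u)) * ((starRingEnd ℂ) w) ^ n) -
        ((∏ k, (u - b k)) * ((starRingEnd ℂ) w) ^ n) *
          ((∏ k, (1 - (starRingEnd ℂ) (a k) * u)) * ((starRingEnd ℂ) w) ^ n) := by
      rw [eF u]; ring
    rw [hPP a, hPP b, hQQ a, hQQ b] at hexp
    have hz : (starRingEnd ℂ) (∏ k, (1 - (starRingEnd ℂ) (a k) * w)) *
          (starRingEnd ℂ) (∏ k, (w - b k)) -
        (starRingEnd ℂ) (∏ k, (1 - (starRingEnd ℂ) (b k) * w)) *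
          (starRingEnd ℂ) (∏ k, (w - a k)) = (starRingEnd ℂ) (-(eval w F)) := by
      rw [map_neg, eF w, map_sub, map_mul, map_mul]; ring
    rw [hz, hFw, neg_zero, map_zero] at hexp
    rcases mul_eq_zero.1 hexp with h | h
    · exact h
    · exact absurd h (mul_ne_zero (pow_ne_zero _ hcw) (pow_ne_zero _ hcw))
  -- the root set S
  set T : Finset (Fin n) := Finset.univ.filter (fun j => lam j ≠ 0) with hT
  set mu : Fin n → ℂ := fun j => ((starRingEnd ℂ) (lam j))⁻¹ with hmu
  have hmu_abs : ∀ j ∈ T, 1 < ‖mu j‖ := by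
    intro j hj
    rw [hT, Finset.mem_filter] at hj
    rw [hmu]
    simp only [norm_inv, Complex.norm_conj]
    rw [lt_inv_comm₀ (by norm_num) (by
      simpa [norm_pos_iff] using hj.2)]
    simpa using hlam j
  have hmu_inj : Set.InjOn mu ↑T := by
    intro i _ j _ hij
    apply hlaminj
    have h1 : (starRingEnd ℂ) (lam i) = (starRingEnd ℂ) (lam j) := inv_injective hij
    simpa using congrArg (starRingEnd ℂ) h1
  set S : Finset ℂ := (Finset.univ.image lam) ∪ (T.image mu) with hS
  have hdisj : Disjoint (Finset.univ.image lam) (T.image mu) := by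
    rw [Finset.disjoint_left]
    intro r hr hr'
    obtain ⟨j, _, rfl⟩ := Finset.mem_image.1 hr
    obtain ⟨i, hi, hie⟩ := Finset.mem_image.1 hr'
    have h1 := hmu_abs i hi
    rw [hie] at h1
    exact absurd (hlam j) (by linarith)
  have hcardS : S.card = n + T.card := by
    rw [hS, Finset.card_union_of_disjoint hdisj,
      Finset.card_image_of_injective _ hlaminj, Finset.card_univ, Fintype.card_fin,
      Finset.card_image_of_injOn hmu_inj]
  have hroots : ∀ r ∈ S, F.IsRoot r := by
    intro r hr
    rw [hS, Finset.mem_union] at hr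
    rcases hr with hr | hr
    · obtain ⟨j, _, rfl⟩ := Finset.mem_image.1 hr
      exact hFlam j
    · obtain ⟨i, hi, rfl⟩ := Finset.mem_image.1 hr
      rw [hT, Finset.mem_filter] at hi
      exact hrefl (lam i) hi.2 (hFlam i)
  -- divisibility
  set G : Polynomial ℂ := ∏ r ∈ S, (X - C r) with hG
  have hdvd : G ∣ F := by
    rw [hG, Finset.prod_eq_multiset_prod]
    rw [Multiset.prod_X_sub_C_dvd_iff_le_roots hFne]
    rw [Multiset.le_iff_count]
    intro r
    by_cases hr : r ∈ S
    · rw [Multiset.count_eq_one_of_mem S.nodup hr, Polynomial.count_roots]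
      exact (Polynomial.rootMultiplicity_pos hFne).2 (hroots r hr)
    · rw [Multiset.count_eq_zero_of_notMem (by simpa using hr)]
      exact Nat.zero_le _
  obtain ⟨L, hL⟩ := hdvd
  have hGmonic : G.Monic := monic_prod_of_monic _ _ fun r _ => monic_X_sub_C r
  have hGdeg : G.natDegree = S.card := by
    rw [hG, natDegree_prod _ _ fun r _ => X_sub_C_ne_zero r]
    simp [natDegree_X_sub_C]
  have hLne : L ≠ 0 := fun h => hFne (by rw [hL, h, mul_zero])
  have hpAdeg : pA.natDegree ≤ n := by
    refine le_trans (natDegree_prod_le _ _) ?_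
    simp [natDegree_X_sub_C]
  have hpBdeg : pB.natDegree ≤ n := by
    refine le_trans (natDegree_prod_le _ _) ?_
    simp [natDegree_X_sub_C]
  have hqdeg : ∀ c : Fin n → ℂ, (∏ k, (1 - C ((starRingEnd ℂ) (c k)) * X) :
      Polynomial ℂ).natDegree ≤ n := by
    intro c
    refine le_trans (natDegree_prod_le _ _) ?_
    have : ∀ k : Fin n, ((1 : Polynomial ℂ) - C ((starRingEnd ℂ) (c k)) * X).natDegree ≤ 1 := by
      intro k
      refine le_trans (natDegree_sub_le _ _) ?_
      simp only [natDegree_one, max_le_iff]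
      exact ⟨Nat.zero_le _, le_trans (natDegree_C_mul_le _ _) natDegree_X_le⟩
    refine le_trans (Finset.sum_le_sum fun k _ => this k) ?_
    simp
  have hFdeg : F.natDegree ≤ n + n := by
    rw [hFdef]
    refine le_trans (natDegree_sub_le _ _) (max_le ?_ ?_)
    · exact le_trans (natDegree_mul_le)
        (add_le_add hpAdeg (by rw [hqB]; exact hqdeg b))
    · exact le_trans (natDegree_mul_le)
        (add_le_add hpBdeg (by rw [hqA]; exact hqdeg a))
  have hTcard : n ≤ T.card + 1 := by
    have h1 : (Finset.univ.filter (fun j => lam j = 0) : Finset (Fin n)).card ≤ 1 := by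
      rw [Finset.card_le_one]
      intro i hi j hj
      rw [Finset.mem_filter] at hi hj
      exact hlaminj (hi.2.trans hj.2.symm)
    have h2 := Finset.card_filter_add_card_filter_not
      (s := (Finset.univ : Finset (Fin n))) (p := fun j => lam j = 0)
    rw [Finset.card_univ, Fintype.card_fin] at h2
    have h3 : T.card = (Finset.univ.filter (fun j => ¬ lam j = 0) : Finset (Fin n)).card := by
      rw [hT]
    omega
  have hdegL : L.natDegree ≤ 1 := by
    have h1 : F.natDegree = G.natDegree + L.natDegree := by
      rw [hL, natDegree_mul hGmonic.ne_zero hLne]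
    rw [hGdeg, hcardS] at h1
    omega
  have hLeq : L = C (L.coeff 1) * X + C (L.coeff 0) := eq_X_add_C_of_natDegree_le_one hdegL
  set α : ℂ := L.coeff 1 with hα
  set β : ℂ := L.coeff 0 with hβ
  -- evaluation of G on the circle
  set Cc : ℂ := ∏ j, (if lam j = 0 then 1 else -(((starRingEnd ℂ) (lam j))⁻¹)) with hCc
  set PrR : ℂ → ℝ := fun w => ∏ j, Complex.normSq (w - lam j) with hPrR
  have hPr_pos : ∀ w : ℂ, ‖w‖ = 1 → 0 < PrR w := by
    intro w hw
    rw [hPrR]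
    refine Finset.prod_pos fun j _ => Complex.normSq_pos.2 (sub_ne_zero.2 fun h => ?_)
    rw [h] at hw
    exact absurd (hlam j) (by rw [hw]; simp)
  have hGcirc : ∀ w : ℂ, ‖w‖ = 1 →
      eval w G = w ^ n * Cc * ((PrR w : ℝ) : ℂ) := by
    intro w hw
    have hww : w * (starRingEnd ℂ) w = 1 := by
      rw [Complex.mul_conj, Complex.normSq_eq_norm_sq, hw]; norm_num
    have hevG : eval w G = ∏ r ∈ S, (w - r) := by
      rw [hG, eval_prod]
      exact Finset.prod_congr rfl fun r _ => by simp
    rw [hevG, hS, Finset.prod_union hdisj, Finset.prod_image (fun i _ j _ h => hlaminj h),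
      Finset.prod_image (fun i hi j hj h => hmu_inj hi hj h), hT,
      Finset.prod_filter]
    rw [← Finset.prod_mul_distrib]
    have hstep : ∀ j : Fin n, (w - lam j) * (if lam j ≠ 0 then w - mu j else 1) =
        w * (if lam j = 0 then 1 else -(((starRingEnd ℂ) (lam j))⁻¹)) *
          ((Complex.normSq (w - lam j) : ℝ) : ℂ) := by
      intro j
      by_cases hj : lam j = 0
      · rw [if_neg (by simp [hj]), if_pos hj, hj, mul_one, mul_one, sub_zero]
        rw [Complex.normSq_eq_norm_sq, hw]
        norm_num
      · rw [if_pos hj, if_neg hj]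
        have hcl : (starRingEnd ℂ) (lam j) ≠ 0 := by simpa using hj
        have h2 : w - mu j = -(((starRingEnd ℂ) (lam j))⁻¹) * w *
            ((starRingEnd ℂ) w - (starRingEnd ℂ) (lam j)) := by
          rw [hmu]
          field_simp
          linear_combination hww
        rw [← Complex.mul_conj, map_sub, h2]
        ring
    rw [Finset.prod_congr rfl fun j _ => hstep j, Finset.prod_mul_distrib,
      Finset.prod_mul_distrib, Finset.prod_const, Finset.card_univ, Fintype.card_fin,
      ← hCc, hPrR, Complex.ofReal_prod]
  -- the linear equation on the circle
  have hEcirc : ∀ w : ℂ, ‖w‖ = 1 →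
      W w - (starRingEnd ℂ) (W w) = Cc * ((PrR w : ℝ) : ℂ) * (α * w + β) := by
    intro w hw
    have hw0 : w ≠ 0 := fun h => by rw [h] at hw; simp at hw
    have h1 : eval w F = eval w G * eval w L := by rw [hL, eval_mul]
    have h2 : eval w L = α * w + β := by
      rw [hLeq]; simp [hα, hβ]
    rw [hcirc w hw, hGcirc w hw, h2] at h1
    have h3 : w ^ n * (W w - (starRingEnd ℂ) (W w)) =
        w ^ n * (Cc * ((PrR w : ℝ) : ℂ) * (α * w + β)) := by rw [h1]; ring
    exact mul_left_cancel₀ (pow_ne_zero n hw0) h3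
  have hD : ∀ w : ℂ, ‖w‖ = 1 →
      Cc * (α * w + β) + (starRingEnd ℂ) Cc * ((starRingEnd ℂ) α * (starRingEnd ℂ) w +
        (starRingEnd ℂ) β) = 0 := by
    intro w hw
    have h1 := hEcirc w hw
    have h2 := congrArg (starRingEnd ℂ) h1
    simp only [map_sub, map_mul, map_add, Complex.conj_conj, Complex.conj_ofReal] at h2
    have h4 : ((PrR w : ℝ) : ℂ) * (Cc * (α * w + β) + (starRingEnd ℂ) Cc *
        ((starRingEnd ℂ) α * (starRingEnd ℂ) w + (starRingEnd ℂ) β)) = 0 := by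
      linear_combination -h1 - h2
    rcases mul_eq_zero.1 h4 with h | h
    · exact absurd h (by
        simpa using ne_of_gt (hPr_pos w hw))
    · exact h
  -- extract α = 0
  have e1 := hD 1 (by simp)
  have e2 := hD (-1) (by simp)
  have e3 := hD Complex.I (by simp)
  simp only [map_one, map_neg, Complex.conj_I, mul_one, mul_neg_one] at e1 e2 e3
  have hCc_ne : Cc ≠ 0 := by
    rw [hCc]
    refine Finset.prod_ne_zero_iff.2 fun j _ => ?_
    by_cases hj : lam j = 0
    · rw [if_pos hj]; norm_num
    · rw [if_neg hj]
      exact neg_ne_zero.2 (inv_ne_zero (by simpa using hj))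
  have hα0 : α = 0 := by
    have hCα : Cc * α = 0 := by
      linear_combination (1/4 + Complex.I/4) * e1 + (-1/4 + Complex.I/4) * e2
        + (-Complex.I/2) * e3 + ((Cc * α - (starRingEnd ℂ) Cc * (starRingEnd ℂ) α)/2) *
          Complex.I_sq
    exact (mul_eq_zero.1 hCα).resolve_left hCc_ne
  have hβne : β ≠ 0 := by
    intro h
    apply hLne
    rw [hLeq, hα0, h]
    simp
  set s : ℂ := Cc * β with hs
  have hs_ne : s ≠ 0 := mul_ne_zero hCc_ne hβne
  have hcα0 : (starRingEnd ℂ) α = 0 := by rw [hα0, map_zero]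
  have hs_conj : s + (starRingEnd ℂ) s = 0 := by
    rw [hs, map_mul]
    linear_combination e1 - Cc * hα0 - (starRingEnd ℂ) Cc * hcα0
  have hs_re : s.re = 0 := by
    have := Complex.add_conj s
    rw [hs_conj] at this
    have h0 : (2 * s.re : ℝ) = (0 : ℝ) := by
      exact_mod_cast this.symm
    linarith
  set t : ℝ := s.im with hts
  have ht_ne : t ≠ 0 := by
    intro h
    have him : s.im = 0 := by rw [← hts]; exact h
    exact hs_ne (Complex.ext (by simpa using hs_re) (by simpa using him))
  have hsIt : s = (t : ℝ) * Complex.I := by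
    apply Complex.ext <;> simp [hs_re, hts]
  -- imaginary part of W on the circle
  have hImW : ∀ w : ℂ, ‖w‖ = 1 → (W w).im = PrR w * t / 2 := by
    intro w hw
    have h1 := hEcirc w hw
    rw [hα0, Complex.sub_conj] at h1
    have h2 : ((2 * (W w).im : ℝ) : ℂ) * Complex.I = ((PrR w * t : ℝ) : ℂ) * Complex.I := by
      rw [h1]
      push_cast
      linear_combination ((PrR w : ℝ) : ℂ) * (hs.symm.trans hsIt)
    have h3 := mul_right_cancel₀ Complex.I_ne_zero h2
    have h4 : (2 * (W w).im : ℝ) = PrR w * t := by exact_mod_cast h3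
    linarith
  -- final contradiction via the maximum principle
  rcases ht_ne.lt_or_gt with htneg | htpos
  · refine key_max n b a ha fun z hz => ?_
    have h1 : (∏ k, (z - b k)) * (starRingEnd ℂ) (∏ k, (z - a k)) =
        (starRingEnd ℂ) (W z) := by
      rw [hW]
      simp only [map_mul, Complex.conj_conj]
      ring
    rw [h1, Complex.conj_im, hImW z hz]
    have hp := hPr_pos z hz
    have h2 : 0 < PrR z * (-t) / 2 := div_pos (mul_pos hp (by linarith)) (by norm_num)
    linarith
  · refine key_max n a b hb fun z hz => ?_
    have h1 : (∏ k, (z - a k)) * (starRingEnd ℂ) (∏ k, (z - b k)) = W z := by rw [hW]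
    rw [h1, hImW z hz]
    exact div_pos (mul_pos (hPr_pos z hz) htpos) (by norm_num)
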